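/- If a Boolean function family (f_n)_{n∈ℕ} is non-uniformly polynomial-length reducible to a Boolean function family (g_n)_{n∈ℕ} and (g_n)_{n∈ℕ} belongs to PLIS, then (f_n)_{n∈ℕ} belongs to PLIS. -/

import Mathlib

/-- Boolean register names: `inp i` is input register `in:(i+1)`,
`aux i` is auxiliary register `aux:(i+1)`, `out` is the output register. -/
inductive Reg where
  | inp : ℕ → Reg
  | aux : ℕ → Reg
  | out : Reg
deriving DecidableEq

/-- Basic instructions: register reads/writes, and (for splitting instruction
sequences) `split p` and `reply p` for Boolean parameters `p`. -/
inductive BInstr where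
  | get : Reg → BInstr
  | set : Reg → Bool → BInstr
  | split : ℕ → BInstr
  | reply : ℕ → BInstr
deriving DecidableEq

/-- Primitive instructions. -/
inductive PInstr where
  | plain : BInstr → PInstr
  | pos : BInstr → PInstr
  | neg : BInstr → PInstr
  | jump : ℕ → PInstr
  | halt : PInstr
deriving DecidableEq

abbrev RegState := Reg → Bool

/-- State change caused by processing a basic instruction. -/
def BInstr.effect : BInstr → RegState → RegState
  | .set r b, s => Function.update s r b
  | _, s => s

/-- Reply produced by processing a basic instruction. -/
def BInstr.rpl : BInstr → RegState → Bool
  | .get r, s => s r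
  | .set _ b, _ => b
  | _, _ => false

def BInstr.isSplitReply : BInstr → Bool
  | .split _ => true
  | .reply _ => true
  | _ => false

/-- Single-thread execution of an instruction sequence on Boolean registers;
`none` means deadlock, `some s` means termination in register state `s`.
(`split`/`reply` instructions make no sense here and deadlock.) -/
def exec : List PInstr → RegState → Option RegState
  | [], _ => none
  | .plain a :: X, s =>
      if a.isSplitReply then none else exec X (a.effect s)
  | .pos a :: X, s =>
      if a.isSplitReply then none
      else if a.rpl s then exec X (a.effect s) else exec (X.drop 1) (a.effect s)
  | .neg a :: X, s =>
      if a.isSplitReply then none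
      else if a.rpl s then exec (X.drop 1) (a.effect s) else exec X (a.effect s)
  | .jump 0 :: _, _ => none
  | .jump (l+1) :: X, s => exec (X.drop l) s
  | .halt :: _, s => some s
termination_by X _ => X.length
decreasing_by all_goals (simp only [List.length_drop, List.length_cons]; omega)

/-- Initial register state: input registers `in:1 .. in:n` contain
`b 0, ..., b (n-1)`; all other registers contain `false`. -/
def initState (n : ℕ) (b : Fin n → Bool) : RegState := fun r =>
  match r with
  | .inp i => if h : i < n then b ⟨i, h⟩ else false
  | _ => false

/-- `X` computes the `n`-ary Boolean function `f`: for every input, execution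
terminates (does not deadlock) with the output register containing `f b`. -/
def Computes {n : ℕ} (f : (Fin n → Bool) → Bool) (X : List PInstr) : Prop :=
  ∀ b : Fin n → Bool, ∃ s : RegState,
    exec X (initState n b) = some s ∧ s Reg.out = f b

/-- Basic instructions allowed in `IS_br`. -/
def BrBasic : BInstr → Prop
  | .get (.inp _) => True
  | .get (.aux _) => True
  | .set (.aux _) _ => True
  | .set .out _ => True
  | _ => False

/-- Basic instructions allowed in `IS_br^na`. -/
def NaBasic : BInstr → Prop
  | .get (.inp _) => True
  | .set .out _ => True
  | _ => False

def InstrBasicOK (P : BInstr → Prop) : PInstr → Prop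
  | .plain a => P a
  | .pos a => P a
  | .neg a => P a
  | _ => True

/-- Membership of `IS_br` (non-empty, only allowed basic instructions). -/
def ISbr (X : List PInstr) : Prop :=
  X ≠ [] ∧ ∀ u ∈ X, InstrBasicOK BrBasic u

/-- Membership of `IS_br^na`. -/
def ISbrna (X : List PInstr) : Prop :=
  X ≠ [] ∧ ∀ u ∈ X, InstrBasicOK NaBasic u

/-- The primitive instruction contains the basic instruction `out.set:false`. -/
def UsesOutSetFalse : PInstr → Prop
  | .plain (.set .out false) => True
  | .pos (.set .out false) => True
  | .neg (.set .out false) => True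
  | _ => False

/-- The class PLIS of Boolean function families computable by
polynomial-length instruction sequences from `IS_br`. -/
def PLIS (F : (n : ℕ) → (Fin n → Bool) → Bool) : Prop :=
  ∃ h : Polynomial ℕ, ∀ n : ℕ, ∃ X : List PInstr,
    ISbr X ∧ Computes (F n) X ∧ X.length ≤ h.eval n

/-- `f` is length-`l` reducible to `g`. -/
def LengthRed (l : ℕ) {n m : ℕ} (f : (Fin n → Bool) → Bool)
    (g : (Fin m → Bool) → Bool) : Prop :=
  ∃ h : Fin m → (Fin n → Bool) → Bool,
    (∀ j : Fin m, ∃ X : List PInstr, ISbr X ∧ Computes (h j) X ∧ X.length ≤ l) ∧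
    ∀ b : Fin n → Bool, f b = g (fun j => h j b)

/-- Non-uniform polynomial-length reducibility of Boolean function families. -/
def PLRed (F G : (n : ℕ) → (Fin n → Bool) → Bool) : Prop :=
  ∃ q : Polynomial ℕ, ∀ n : ℕ, ∃ l m : ℕ,
    l ≤ q.eval n ∧ m ≤ q.eval n ∧ LengthRed l (F n) (G m)

section Aux

/-- Rename registers in a basic instruction. -/
def relR (ρ : Reg → Reg) : BInstr → BInstr
  | .get r => .get (ρ r)
  | .set r b => .set (ρ r) b
  | .split p => .split p
  | .reply p => .reply p

/-- Rename registers in a primitive instruction. -/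
def relP (ρ : Reg → Reg) : PInstr → PInstr
  | .plain a => .plain (relR ρ a)
  | .pos a => .pos (relR ρ a)
  | .neg a => .neg (relR ρ a)
  | .jump l => .jump l
  | .halt => .halt

/-- Replace each `halt` by a jump to just past the end of the list. -/
def adj : List PInstr → List PInstr
  | [] => []
  | .halt :: X => .jump (X.length + 1) :: adj X
  | .plain a :: X => .plain a :: adj X
  | .pos a :: X => .pos a :: adj X
  | .neg a :: X => .neg a :: adj X
  | .jump l :: X => .jump l :: adj X

@[simp] lemma adj_length : ∀ X : List PInstr, (adj X).length = X.length := by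
  intro X
  induction X with
  | nil => rfl
  | cons u X ih => cases u <;> simp [adj, ih]

lemma adj_drop : ∀ (k : ℕ) (X : List PInstr), adj (X.drop k) = (adj X).drop k := by
  intro k
  induction k with
  | zero => simp
  | succ k ih =>
    intro X
    cases X with
    | nil => rfl
    | cons u X =>
      have h1 : (u :: X).drop (k+1) = X.drop k := rfl
      rw [h1, ih]
      cases u <;> rfl

lemma mem_adj {u : PInstr} : ∀ {X : List PInstr}, u ∈ adj X → u ∈ X ∨ ∃ l, u = .jump l := by
  intro X
  induction X with
  | nil => intro h; exact absurd h (by simp [adj])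
  | cons v X ih =>
    intro h
    have step : u = v ∨ (∃ l, u = PInstr.jump l) ∨ u ∈ adj X := by
      cases v <;> simp [adj] at h <;>
        first
          | (rcases h with h | h
             · exact Or.inr (Or.inl ⟨_, h⟩)
             · exact Or.inr (Or.inr h))
          | tauto
    rcases step with h | h | h
    · exact Or.inl (h ▸ List.mem_cons_self)
    · exact Or.inr h
    · rcases ih h with h | h
      · exact Or.inl (List.mem_cons_of_mem _ h)
      · exact Or.inr h

/-- Lemma A: replacing halts with jumps to the end lets execution continue in `Rest`. -/
lemma exec_adj_append : ∀ (n : ℕ) (X : List PInstr), X.length ≤ n →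
    ∀ (Rest : List PInstr) (s t : RegState), exec X s = some t →
    exec (adj X ++ Rest) s = exec Rest t := by
  intro n
  induction n with
  | zero =>
    intro X hX Rest s t h
    have : X = [] := List.length_eq_zero_iff.1 (Nat.le_zero.1 hX)
    subst this; simp [exec] at h
  | succ n ih =>
    intro X hX Rest s t h
    match X with
    | [] => simp [exec] at h
    | .plain a :: X' =>
      rw [exec] at h
      by_cases hsp : a.isSplitReply
      · rw [if_pos hsp] at h; exact absurd h (by simp)
      · rw [if_neg hsp] at h
        rw [show adj (.plain a :: X') = .plain a :: adj X' from rfl, List.cons_append, exec,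
          if_neg hsp]
        exact ih X' (by simpa using hX) Rest _ t h
    | .pos a :: X' =>
      rw [exec] at h
      by_cases hsp : a.isSplitReply
      · rw [if_pos hsp] at h; exact absurd h (by simp)
      · rw [if_neg hsp] at h
        rw [show adj (.pos a :: X') = .pos a :: adj X' from rfl, List.cons_append, exec,
          if_neg hsp]
        by_cases hr : a.rpl s
        · rw [if_pos hr] at h ⊢
          exact ih X' (by simpa using hX) Rest _ t h
        · rw [if_neg hr] at h ⊢
          have hne : X' ≠ [] := by rintro rfl; simp [exec] at h
          have h1 : 1 ≤ (adj X').length := by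
            rw [adj_length]
            exact Nat.one_le_iff_ne_zero.2 (fun hc => hne (List.length_eq_zero_iff.1 hc))
          rw [List.drop_append_of_le_length h1, ← adj_drop]
          have h2 : (X'.drop 1).length ≤ n := by
            simp only [List.length_drop]
            have := hX; simp only [List.length_cons] at this; omega
          exact ih (X'.drop 1) h2 Rest _ t h
    | .neg a :: X' =>
      rw [exec] at h
      by_cases hsp : a.isSplitReply
      · rw [if_pos hsp] at h; exact absurd h (by simp)
      · rw [if_neg hsp] at h
        rw [show adj (.neg a :: X') = .neg a :: adj X' from rfl, List.cons_append, exec,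
          if_neg hsp]
        by_cases hr : a.rpl s
        · rw [if_pos hr] at h ⊢
          have hne : X' ≠ [] := by rintro rfl; simp [exec] at h
          have h1 : 1 ≤ (adj X').length := by
            rw [adj_length]
            exact Nat.one_le_iff_ne_zero.2 (fun hc => hne (List.length_eq_zero_iff.1 hc))
          rw [List.drop_append_of_le_length h1, ← adj_drop]
          have h2 : (X'.drop 1).length ≤ n := by
            simp only [List.length_drop]
            have := hX; simp only [List.length_cons] at this; omega
          exact ih (X'.drop 1) h2 Rest _ t h
        · rw [if_neg hr] at h ⊢
          exact ih X' (by simpa using hX) Rest _ t h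
    | .jump 0 :: X' => simp [exec] at h
    | .jump (l+1) :: X' =>
      rw [exec] at h
      have hll : l ≤ X'.length := by
        by_contra hc
        rw [List.drop_eq_nil_of_le (le_of_not_ge hc)] at h
        simp [exec] at h
      rw [show adj (.jump (l+1) :: X') = .jump (l+1) :: adj X' from rfl, List.cons_append, exec,
        List.drop_append_of_le_length (by rw [adj_length]; exact hll), ← adj_drop]
      have h2 : (X'.drop l).length ≤ n := by
        simp only [List.length_drop]
        have := hX; simp only [List.length_cons] at this; omega
      exact ih (X'.drop l) h2 Rest _ t h
    | .halt :: X' =>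
      rw [exec] at h
      cases h
      rw [show adj (.halt :: X') = .jump (X'.length + 1) :: adj X' from rfl, List.cons_append,
        exec, List.drop_append_of_le_length (by rw [adj_length]),
        ← adj_drop, List.drop_eq_nil_of_le le_rfl]
      rfl

end Aux

section Aux2

noncomputable def lift (ρ : Reg → Reg) (s t : RegState) : RegState := fun r =>
  @dite _ (∃ r', ρ r' = r) (Classical.propDecidable _) (fun h => t h.choose) (fun _ => s r)

lemma lift_apply {ρ : Reg → Reg} (hρ : Function.Injective ρ) (s t : RegState) (r : Reg) :
    lift ρ s t (ρ r) = t r := by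
  have h : ∃ r', ρ r' = ρ r := ⟨r, rfl⟩
  rw [lift, dif_pos h, hρ h.choose_spec]

lemma lift_not_range {ρ : Reg → Reg} (s t : RegState) (r : Reg)
    (h : ¬ ∃ r', ρ r' = r) : lift ρ s t r = s r := by
  rw [lift, dif_neg h]

lemma lift_congr {ρ : Reg → Reg} {s s' : RegState} (t : RegState)
    (h : ∀ r, (¬ ∃ r', ρ r' = r) → s' r = s r) : lift ρ s' t = lift ρ s t := by
  funext r
  by_cases hr : ∃ r', ρ r' = r
  · rw [lift, lift, dif_pos hr, dif_pos hr]
  · rw [lift, lift, dif_neg hr, dif_neg hr, h r hr]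

@[simp] lemma relR_isSplitReply (ρ : Reg → Reg) (a : BInstr) :
    (relR ρ a).isSplitReply = a.isSplitReply := by
  cases a <;> rfl

lemma relR_rpl (ρ : Reg → Reg) (a : BInstr) (s : RegState) :
    (relR ρ a).rpl s = a.rpl (s ∘ ρ) := by
  cases a <;> rfl

lemma relR_effect_comp {ρ : Reg → Reg} (hρ : Function.Injective ρ) (a : BInstr)
    (s : RegState) : ((relR ρ a).effect s) ∘ ρ = a.effect (s ∘ ρ) := by
  cases a with
  | set r b =>
    funext r'
    simp only [relR, BInstr.effect, Function.comp_apply]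
    by_cases h : r' = r
    · subst h; simp [Function.update]
    · rw [Function.update_of_ne (fun hc => h (hρ hc)), Function.update_of_ne h]; rfl
  | get r => rfl
  | split p => rfl
  | reply p => rfl

lemma relR_effect_offrange {ρ : Reg → Reg} (a : BInstr) (s : RegState) (r : Reg)
    (h : ¬ ∃ r', ρ r' = r) : (relR ρ a).effect s r = s r := by
  cases a with
  | set r' b =>
    simp only [relR, BInstr.effect]
    exact Function.update_of_ne (fun hc => h ⟨r', hc.symm⟩) _ _
  | get r' => rfl
  | split p => rfl
  | reply p => rfl

/-- Lemma B: execution of a register-renamed program. -/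
lemma exec_map {ρ : Reg → Reg} (hρ : Function.Injective ρ) :
    ∀ (n : ℕ) (X : List PInstr), X.length ≤ n → ∀ s : RegState,
    exec (X.map (relP ρ)) s = Option.map (lift ρ s) (exec X (s ∘ ρ)) := by
  intro n
  induction n with
  | zero =>
    intro X hX s
    have : X = [] := List.length_eq_zero_iff.1 (Nat.le_zero.1 hX)
    subst this; simp [exec]
  | succ n ih =>
    intro X hX s
    have effS : ∀ a : BInstr, lift ρ ((relR ρ a).effect s) = lift ρ s := fun a =>
      funext fun t => lift_congr t fun r hr => relR_effect_offrange a s r hr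
    match X with
    | [] => simp [exec]
    | .plain a :: X' =>
      have hX' : X'.length ≤ n := by simpa using hX
      rw [show (PInstr.plain a :: X').map (relP ρ) = .plain (relR ρ a) :: X'.map (relP ρ)
        from rfl, exec, exec, relR_isSplitReply]
      by_cases hsp : a.isSplitReply
      · rw [if_pos hsp, if_pos hsp]; rfl
      · rw [if_neg hsp, if_neg hsp, ih X' hX', relR_effect_comp hρ, effS a]
    | .pos a :: X' =>
      have hX' : X'.length ≤ n := by simpa using hX
      have hXd : ∀ k, (X'.drop k).length ≤ n := fun k => by
        rw [List.length_drop]; exact le_trans (Nat.sub_le _ _) hX'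
      rw [show (PInstr.pos a :: X').map (relP ρ) = .pos (relR ρ a) :: X'.map (relP ρ)
        from rfl, exec, exec, relR_isSplitReply]
      by_cases hsp : a.isSplitReply
      · rw [if_pos hsp, if_pos hsp]; rfl
      · rw [if_neg hsp, if_neg hsp, relR_rpl]
        by_cases hr : a.rpl (s ∘ ρ)
        · rw [if_pos hr, if_pos hr, ih X' hX', relR_effect_comp hρ, effS a]
        · rw [if_neg hr, if_neg hr, ← List.map_drop, ih (X'.drop 1) (hXd 1),
            relR_effect_comp hρ, effS a]
    | .neg a :: X' =>
      have hX' : X'.length ≤ n := by simpa using hX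
      have hXd : ∀ k, (X'.drop k).length ≤ n := fun k => by
        rw [List.length_drop]; exact le_trans (Nat.sub_le _ _) hX'
      rw [show (PInstr.neg a :: X').map (relP ρ) = .neg (relR ρ a) :: X'.map (relP ρ)
        from rfl, exec, exec, relR_isSplitReply]
      by_cases hsp : a.isSplitReply
      · rw [if_pos hsp, if_pos hsp]; rfl
      · rw [if_neg hsp, if_neg hsp, relR_rpl]
        by_cases hr : a.rpl (s ∘ ρ)
        · rw [if_pos hr, if_pos hr, ← List.map_drop, ih (X'.drop 1) (hXd 1),
            relR_effect_comp hρ, effS a]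
        · rw [if_neg hr, if_neg hr, ih X' hX', relR_effect_comp hρ, effS a]
    | .jump 0 :: X' =>
      rw [show (PInstr.jump 0 :: X').map (relP ρ) = .jump 0 :: X'.map (relP ρ) from rfl,
        exec, exec]; rfl
    | .jump (l+1) :: X' =>
      have hX' : X'.length ≤ n := by simpa using hX
      have hXd : (X'.drop l).length ≤ n := by
        rw [List.length_drop]; exact le_trans (Nat.sub_le _ _) hX'
      rw [show (PInstr.jump (l+1) :: X').map (relP ρ) = .jump (l+1) :: X'.map (relP ρ)
        from rfl, exec, exec, ← List.map_drop, ih (X'.drop l) hXd]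
    | .halt :: X' =>
      rw [show (PInstr.halt :: X').map (relP ρ) = .halt :: X'.map (relP ρ) from rfl,
        exec, exec]
      simp only [Option.map_some]
      congr 1
      funext r
      by_cases hr : ∃ r', ρ r' = r
      · obtain ⟨r', rfl⟩ := hr
        rw [lift_apply hρ]; rfl
      · rw [lift_not_range _ _ _ hr]

/-- `u` writes register `r`. -/
def SetsReg (u : PInstr) (r : Reg) : Prop :=
  match u with
  | .plain (.set r' _) => r' = r
  | .pos (.set r' _) => r' = r
  | .neg (.set r' _) => r' = r
  | _ => False

lemma effect_of_not_sets {a : BInstr} {r : Reg} (h : ∀ b, a ≠ .set r b) (s : RegState) :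
    a.effect s r = s r := by
  cases a with
  | set r' b =>
    refine Function.update_of_ne (fun hc => ?_) _ _
    exact h b (by rw [hc])
  | get r' => rfl
  | split p => rfl
  | reply p => rfl

/-- Lemma C: registers never written keep their value. -/
lemma exec_preserve : ∀ (n : ℕ) (X : List PInstr), X.length ≤ n →
    ∀ (r : Reg), (∀ u ∈ X, ¬ SetsReg u r) → ∀ (s t : RegState),
    exec X s = some t → t r = s r := by
  intro n
  induction n with
  | zero =>
    intro X hX r hset s t h
    have : X = [] := List.length_eq_zero_iff.1 (Nat.le_zero.1 hX)
    subst this; simp [exec] at h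
  | succ n ih =>
    intro X hX r hset s t h
    match X with
    | [] => simp [exec] at h
    | .plain a :: X' =>
      have hX' : X'.length ≤ n := by simpa using hX
      rw [exec] at h
      by_cases hsp : a.isSplitReply
      · rw [if_pos hsp] at h; exact absurd h (by simp)
      · rw [if_neg hsp] at h
        have ha : ∀ b, a ≠ .set r b := by
          intro b hc; subst hc
          exact hset _ (List.mem_cons_self) rfl
        rw [ih X' hX' r (fun u hu => hset u (List.mem_cons_of_mem _ hu)) _ t h,
          effect_of_not_sets ha]
    | .pos a :: X' =>
      have hX' : X'.length ≤ n := by simpa using hX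
      have hXd : ∀ k, (X'.drop k).length ≤ n := fun k => by
        rw [List.length_drop]; exact le_trans (Nat.sub_le _ _) hX'
      rw [exec] at h
      by_cases hsp : a.isSplitReply
      · rw [if_pos hsp] at h; exact absurd h (by simp)
      · rw [if_neg hsp] at h
        have ha : ∀ b, a ≠ .set r b := by
          intro b hc; subst hc
          exact hset _ (List.mem_cons_self) rfl
        by_cases hr : a.rpl s
        · rw [if_pos hr] at h
          rw [ih X' hX' r (fun u hu => hset u (List.mem_cons_of_mem _ hu)) _ t h,
            effect_of_not_sets ha]
        · rw [if_neg hr] at h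
          rw [ih (X'.drop 1) (hXd 1) r
            (fun u hu => hset u (List.mem_cons_of_mem _ (List.mem_of_mem_drop hu))) _ t h,
            effect_of_not_sets ha]
    | .neg a :: X' =>
      have hX' : X'.length ≤ n := by simpa using hX
      have hXd : ∀ k, (X'.drop k).length ≤ n := fun k => by
        rw [List.length_drop]; exact le_trans (Nat.sub_le _ _) hX'
      rw [exec] at h
      by_cases hsp : a.isSplitReply
      · rw [if_pos hsp] at h; exact absurd h (by simp)
      · rw [if_neg hsp] at h
        have ha : ∀ b, a ≠ .set r b := by
          intro b hc; subst hc
          exact hset _ (List.mem_cons_self) rfl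
        by_cases hr : a.rpl s
        · rw [if_pos hr] at h
          rw [ih (X'.drop 1) (hXd 1) r
            (fun u hu => hset u (List.mem_cons_of_mem _ (List.mem_of_mem_drop hu))) _ t h,
            effect_of_not_sets ha]
        · rw [if_neg hr] at h
          rw [ih X' hX' r (fun u hu => hset u (List.mem_cons_of_mem _ hu)) _ t h,
            effect_of_not_sets ha]
    | .jump 0 :: X' => simp [exec] at h
    | .jump (l+1) :: X' =>
      have hX' : X'.length ≤ n := by simpa using hX
      have hXd : (X'.drop l).length ≤ n := by
        rw [List.length_drop]; exact le_trans (Nat.sub_le _ _) hX'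
      rw [exec] at h
      exact ih (X'.drop l) hXd r
        (fun u hu => hset u (List.mem_cons_of_mem _ (List.mem_of_mem_drop hu))) _ t h
    | .halt :: X' =>
      rw [exec] at h
      cases h; rfl

end Aux2

section Aux3

/-- Renaming for the `j`-th block. -/
def rhoB (j : ℕ) : Reg → Reg
  | .inp i => .inp i
  | .aux i => .aux (Nat.pair (j+1) (i+1))
  | .out => .aux (Nat.pair (j+1) 0)

/-- Renaming for the final block. -/
def rhoY (m : ℕ) : Reg → Reg
  | .inp j => if j < m then .aux (Nat.pair (j+1) 0) else .aux (Nat.pair 0 (2*j))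
  | .aux i => .aux (Nat.pair 0 (2*i+1))
  | .out => .out

lemma rhoB_inj (j : ℕ) : Function.Injective (rhoB j) := by
  intro r r' h
  cases r <;> cases r' <;> simp [rhoB, Nat.pair_eq_pair] at h <;> simp [h] <;> omega

lemma rhoY_inj (m : ℕ) : Function.Injective (rhoY m) := by
  intro r r' h
  cases r with
  | inp i =>
    cases r' with
    | inp i' =>
      simp only [rhoY] at h
      split_ifs at h <;> (injection h with h; rw [Nat.pair_eq_pair] at h) <;>
        exact congrArg Reg.inp (by omega)
    | aux i' =>
      simp only [rhoY] at h
      split_ifs at h <;> (injection h with h; rw [Nat.pair_eq_pair] at h) <;>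
        (exfalso; omega)
    | out =>
      simp only [rhoY] at h
      split_ifs at h <;> exact absurd h (by simp)
  | aux i =>
    cases r' with
    | inp i' =>
      simp only [rhoY] at h
      split_ifs at h <;> (injection h with h; rw [Nat.pair_eq_pair] at h) <;>
        (exfalso; omega)
    | aux i' =>
      simp only [rhoY] at h
      injection h with h; rw [Nat.pair_eq_pair] at h
      exact congrArg Reg.aux (by omega)
    | out => exact absurd h (by simp [rhoY])
  | out =>
    cases r' with
    | inp i' =>
      simp only [rhoY] at h
      split_ifs at h <;> exact absurd h (by simp)
    | aux i' => exact absurd h (by simp [rhoY])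
    | out => rfl

/-- Concatenation of blocks `blk j, blk (j+1), ..., blk (j+d-1)` followed by `tail`. -/
def chainProg (blk : ℕ → List PInstr) (tail : List PInstr) : ℕ → ℕ → List PInstr
  | _, 0 => tail
  | j, d+1 => blk j ++ chainProg blk tail (j+1) d

lemma chainProg_length (blk : ℕ → List PInstr) (tail : List PInstr) (L : ℕ)
    (hL : ∀ k, (blk k).length ≤ L) :
    ∀ d j, (chainProg blk tail j d).length ≤ d * L + tail.length := by
  intro d
  induction d with
  | zero => intro j; simp [chainProg]
  | succ d ih =>
    intro j
    have := ih (j+1)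
    have := hL j
    simp only [chainProg, List.length_append]
    calc (blk j).length + (chainProg blk tail (j+1) d).length
        ≤ L + (d * L + tail.length) := by omega
      _ = (d+1) * L + tail.length := by ring

lemma chainProg_mem (blk : ℕ → List PInstr) (tail : List PInstr) (P : PInstr → Prop)
    (hb : ∀ k u, u ∈ blk k → P u) (ht : ∀ u ∈ tail, P u) :
    ∀ d j, ∀ u ∈ chainProg blk tail j d, P u := by
  intro d
  induction d with
  | zero => intro j u hu; exact ht u hu
  | succ d ih =>
    intro j u hu
    rcases List.mem_append.1 hu with hu | hu
    · exact hb j u hu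
    · exact ih (j+1) u hu

lemma poly_eval_mono (p : Polynomial ℕ) {a b : ℕ} (h : a ≤ b) : p.eval a ≤ p.eval b := by
  rw [Polynomial.eval_eq_sum_range, Polynomial.eval_eq_sum_range]
  exact Finset.sum_le_sum fun i _ => Nat.mul_le_mul_left _ (Nat.pow_le_pow_left h i)

end Aux3

section Aux4

lemma brBasic_relR {ρ : Reg → Reg}
    (hρi : ∀ i, (∃ i', ρ (.inp i) = .inp i') ∨ ∃ i', ρ (.inp i) = .aux i')
    (hρa : ∀ i, ∃ i', ρ (.aux i) = .aux i')
    (hρo : (∃ i', ρ .out = .aux i') ∨ ρ .out = .out)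
    {a : BInstr} (ha : BrBasic a) : BrBasic (relR ρ a) := by
  cases a with
  | get r =>
    cases r with
    | inp i =>
      rcases hρi i with ⟨i', e⟩ | ⟨i', e⟩ <;> (show BrBasic (.get (ρ (.inp i))); rw [e]; trivial)
    | aux i =>
      obtain ⟨i', e⟩ := hρa i
      show BrBasic (.get (ρ (.aux i))); rw [e]; trivial
    | out => exact ha.elim
  | set r b =>
    cases r with
    | inp i => exact ha.elim
    | aux i =>
      obtain ⟨i', e⟩ := hρa i
      show BrBasic (.set (ρ (.aux i)) b); rw [e]; trivial
    | out =>
      rcases hρo with ⟨i', e⟩ | e <;> (show BrBasic (.set (ρ .out) b); rw [e]; trivial)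
  | split p => exact ha.elim
  | reply p => exact ha.elim

lemma brOK_relP {ρ : Reg → Reg}
    (hρi : ∀ i, (∃ i', ρ (.inp i) = .inp i') ∨ ∃ i', ρ (.inp i) = .aux i')
    (hρa : ∀ i, ∃ i', ρ (.aux i) = .aux i')
    (hρo : (∃ i', ρ .out = .aux i') ∨ ρ .out = .out)
    {u : PInstr} (hu : InstrBasicOK BrBasic u) : InstrBasicOK BrBasic (relP ρ u) := by
  cases u with
  | plain a => exact brBasic_relR hρi hρa hρo hu
  | pos a => exact brBasic_relR hρi hρa hρo hu
  | neg a => exact brBasic_relR hρi hρa hρo hu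
  | jump l => trivial
  | halt => trivial

lemma rhoB_cond_i (j : ℕ) :
    ∀ i, (∃ i', rhoB j (.inp i) = .inp i') ∨ ∃ i', rhoB j (.inp i) = .aux i' :=
  fun i => Or.inl ⟨i, rfl⟩

lemma rhoB_cond_a (j : ℕ) : ∀ i, ∃ i', rhoB j (.aux i) = .aux i' := fun i => ⟨_, rfl⟩

lemma rhoB_cond_o (j : ℕ) : (∃ i', rhoB j .out = .aux i') ∨ rhoB j .out = .out :=
  Or.inl ⟨_, rfl⟩

lemma rhoY_cond_i (m : ℕ) :
    ∀ i, (∃ i', rhoY m (.inp i) = .inp i') ∨ ∃ i', rhoY m (.inp i) = .aux i' := by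
  intro i
  by_cases hi : i < m
  · exact Or.inr ⟨Nat.pair (i+1) 0, by simp [rhoY, hi]⟩
  · exact Or.inr ⟨Nat.pair 0 (2*i), by simp [rhoY, hi]⟩

lemma rhoY_cond_a (m : ℕ) : ∀ i, ∃ i', rhoY m (.aux i) = .aux i' := fun i => ⟨_, rfl⟩

lemma rhoY_cond_o (m : ℕ) : (∃ i', rhoY m .out = .aux i') ∨ rhoY m .out = .out :=
  Or.inr rfl

lemma brOK_not_sets_inp {u : PInstr} (hu : InstrBasicOK BrBasic u) (i : ℕ) :
    ¬ SetsReg u (.inp i) := by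
  cases u with
  | plain a =>
    cases a with
    | set r b => cases r with
      | inp i' => exact hu.elim
      | aux i' => simp [SetsReg]
      | out => simp [SetsReg]
    | get r => simp [SetsReg]
    | split p => simp [SetsReg]
    | reply p => simp [SetsReg]
  | pos a =>
    cases a with
    | set r b => cases r with
      | inp i' => exact hu.elim
      | aux i' => simp [SetsReg]
      | out => simp [SetsReg]
    | get r => simp [SetsReg]
    | split p => simp [SetsReg]
    | reply p => simp [SetsReg]
  | neg a =>
    cases a with
    | set r b => cases r with
      | inp i' => exact hu.elim
      | aux i' => simp [SetsReg]
      | out => simp [SetsReg]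
    | get r => simp [SetsReg]
    | split p => simp [SetsReg]
    | reply p => simp [SetsReg]
  | jump l => simp [SetsReg]
  | halt => simp [SetsReg]

lemma rhoB_not_out (j : ℕ) : ¬ ∃ r', rhoB j r' = .out := by
  rintro ⟨r', e⟩
  cases r' <;> simp [rhoB] at e

lemma rhoB_aux_range {j x : ℕ} (h : ∃ r', rhoB j r' = .aux x) :
    ∃ k, x = Nat.pair (j+1) k := by
  obtain ⟨r', e⟩ := h
  cases r' with
  | inp i => exact absurd e (by simp [rhoB])
  | aux i => exact ⟨i+1, by injection e with e; omega⟩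
  | out => exact ⟨0, by injection e with e; omega⟩

lemma chainProg_ne_nil (blk : ℕ → List PInstr) (tail : List PInstr) (ht : tail ≠ []) :
    ∀ d j, chainProg blk tail j d ≠ [] := by
  intro d
  induction d with
  | zero => intro j; exact ht
  | succ d ih =>
    intro j hc
    exact ih (j+1) (List.append_eq_nil_iff.1 hc).2

end Aux4

/-- Proposition 1.1 of the paper: PLIS is closed under non-uniform
polynomial-length reducibility. -/
theorem statement8 (F G : (n : ℕ) → (Fin n → Bool) → Bool)
    (hred : PLRed F G) (hG : PLIS G) : PLIS F := by
  obtain ⟨q, hq⟩ := hred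
  obtain ⟨p, hp⟩ := hG
  refine ⟨q * q + p.comp q, fun n => ?_⟩
  obtain ⟨l, m, hl, hm, hh, hX, hfb⟩ := hq n
  choose Xc hXbr hXcomp hXlen using hX
  obtain ⟨Y, hYbr, hYcomp, hYlen⟩ := hp m
  set blk : ℕ → List PInstr :=
    fun k => if hk : k < m then adj ((Xc ⟨k, hk⟩).map (relP (rhoB k))) else [] with hblk_def
  set Y' : List PInstr := Y.map (relP (rhoY m)) with hY'_def
  refine ⟨chainProg blk Y' 0 m, ⟨?_, ?_⟩, ?_, ?_⟩
  · -- nonempty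
    exact chainProg_ne_nil blk Y' (by
      simp only [hY'_def, ne_eq, List.map_eq_nil_iff]
      exact hYbr.1) m 0
  · -- all instructions allowed
    refine chainProg_mem blk Y' _ ?_ ?_ m 0
    · intro k u hu
      simp only [hblk_def] at hu
      by_cases hk : k < m
      · rw [dif_pos hk] at hu
        rcases mem_adj hu with hu | ⟨l', rfl⟩
        · obtain ⟨v, hv, rfl⟩ := List.mem_map.1 hu
          exact brOK_relP (rhoB_cond_i k) (rhoB_cond_a k) (rhoB_cond_o k) (hXbr ⟨k, hk⟩ |>.2 v hv)
        · trivial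
      · rw [dif_neg hk] at hu
        exact absurd hu List.not_mem_nil
    · intro u hu
      obtain ⟨v, hv, rfl⟩ := List.mem_map.1 hu
      exact brOK_relP (rhoY_cond_i m) (rhoY_cond_a m) (rhoY_cond_o m) (hYbr.2 v hv)
  · -- computes
    intro b
    set c : Fin m → Bool := fun k => hh k b with hc_def
    have key : ∀ d j, j + d = m → ∀ s : RegState,
        (∀ i, s (.inp i) = initState n b (.inp i)) →
        s .out = false →
        (∀ k, s (.aux (Nat.pair 0 k)) = false) →
        (∀ j' k, j ≤ j' → s (.aux (Nat.pair (j'+1) k)) = false) →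
        (∀ j' : Fin m, (j' : ℕ) < j → s (.aux (Nat.pair ((j' : ℕ)+1) 0)) = hh j' b) →
        ∃ t, exec (chainProg blk Y' j d) s = some t ∧ t .out = G m c := by
      intro d
      induction d with
      | zero =>
        intro j hj s hs1 hs2 hs3 hs4 hs5
        have hjm : j = m := by omega
        subst hjm
        have hsY : s ∘ rhoY j = initState j c := by
          funext r
          cases r with
          | inp i =>
            by_cases hi : i < j
            · have : rhoY j (.inp i) = .aux (Nat.pair (i+1) 0) := by simp [rhoY, hi]
              simp only [Function.comp_apply, this, hs5 ⟨i, hi⟩ hi]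
              simp [initState, hi, hc_def]
            · have : rhoY j (.inp i) = .aux (Nat.pair 0 (2*i)) := by simp [rhoY, hi]
              simp only [Function.comp_apply, this, hs3]
              simp [initState, hi]
          | aux i =>
            simp only [Function.comp_apply]
            have : rhoY j (.aux i) = .aux (Nat.pair 0 (2*i+1)) := rfl
            rw [this, hs3]
            simp [initState]
          | out =>
            simp only [Function.comp_apply]
            have : rhoY j .out = .out := rfl
            rw [this, hs2]
            simp [initState]
        obtain ⟨t, ht, hto⟩ := hYcomp c
        refine ⟨lift (rhoY j) s t, ?_, ?_⟩
        · show exec Y' s = _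
          rw [hY'_def, exec_map (rhoY_inj j) Y.length Y le_rfl s, hsY, ht]
          rfl
        · have h1 : lift (rhoY j) s t .out = t .out := lift_apply (rhoY_inj j) s t .out
          rw [h1, hto]
      | succ d ih =>
        intro j hj s hs1 hs2 hs3 hs4 hs5
        have hjm : j < m := by omega
        have hsB : s ∘ rhoB j = initState n b := by
          funext r
          cases r with
          | inp i =>
            simp only [Function.comp_apply]
            have : rhoB j (.inp i) = .inp i := rfl
            rw [this, hs1]
          | aux i =>
            simp only [Function.comp_apply]
            have : rhoB j (.aux i) = .aux (Nat.pair (j+1) (i+1)) := rfl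
            rw [this, hs4 j _ le_rfl]
            simp [initState]
          | out =>
            simp only [Function.comp_apply]
            have : rhoB j .out = .aux (Nat.pair (j+1) 0) := rfl
            rw [this, hs4 j _ le_rfl]
            simp [initState]
        obtain ⟨t, ht, hto⟩ := hXcomp ⟨j, hjm⟩ b
        have hmap : exec ((Xc ⟨j, hjm⟩).map (relP (rhoB j))) s = some (lift (rhoB j) s t) := by
          rw [exec_map (rhoB_inj j) (Xc ⟨j, hjm⟩).length _ le_rfl s, hsB, ht]
          rfl
        have hpres : ∀ i, t (.inp i) = initState n b (.inp i) := fun i =>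
          exec_preserve (Xc ⟨j, hjm⟩).length _ le_rfl (.inp i)
            (fun u hu => brOK_not_sets_inp ((hXbr ⟨j, hjm⟩).2 u hu) i) _ t ht
        set s' : RegState := lift (rhoB j) s t with hs'_def
        have inv1 : ∀ i, s' (.inp i) = initState n b (.inp i) := by
          intro i
          have h1 : s' (.inp i) = t (.inp i) := lift_apply (rhoB_inj j) s t (.inp i)
          rw [h1, hpres]
        have inv2 : s' .out = false := by
          rw [hs'_def, lift_not_range _ _ _ (rhoB_not_out j), hs2]
        have inv3 : ∀ k, s' (.aux (Nat.pair 0 k)) = false := by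
          intro k
          have hnr : ¬ ∃ r', rhoB j r' = .aux (Nat.pair 0 k) := by
            intro hr
            obtain ⟨k', hk'⟩ := rhoB_aux_range hr
            rw [Nat.pair_eq_pair] at hk'
            omega
          rw [hs'_def, lift_not_range _ _ _ hnr, hs3]
        have inv4 : ∀ j' k, j + 1 ≤ j' → s' (.aux (Nat.pair (j'+1) k)) = false := by
          intro j' k hj'
          have hnr : ¬ ∃ r', rhoB j r' = .aux (Nat.pair (j'+1) k) := by
            intro hr
            obtain ⟨k', hk'⟩ := rhoB_aux_range hr
            rw [Nat.pair_eq_pair] at hk'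
            omega
          rw [hs'_def, lift_not_range _ _ _ hnr, hs4 j' k (by omega)]
        have inv5 : ∀ j' : Fin m, (j' : ℕ) < j + 1 →
            s' (.aux (Nat.pair ((j' : ℕ)+1) 0)) = hh j' b := by
          intro j' hj'
          by_cases hjj : (j' : ℕ) = j
          · have h1 : s' (.aux (Nat.pair (j+1) 0)) = t .out :=
              lift_apply (rhoB_inj j) s t .out
            rw [hjj, h1, hto]
            exact congrArg (fun z => hh z b) (Fin.ext hjj.symm)
          · have hnr : ¬ ∃ r', rhoB j r' = .aux (Nat.pair ((j' : ℕ)+1) 0) := by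
              intro hr
              obtain ⟨k', hk'⟩ := rhoB_aux_range hr
              rw [Nat.pair_eq_pair] at hk'
              omega
            rw [hs'_def, lift_not_range _ _ _ hnr, hs5 j' (by omega)]
        obtain ⟨t2, ht2, ht2o⟩ := ih (j+1) (by omega) s' inv1 inv2 inv3 inv4 inv5
        refine ⟨t2, ?_, ht2o⟩
        have hstep : chainProg blk Y' j (d+1) = blk j ++ chainProg blk Y' (j+1) d := rfl
        rw [hstep, hblk_def]
        simp only [dif_pos hjm]
        rw [exec_adj_append ((Xc ⟨j, hjm⟩).map (relP (rhoB j))).length _ le_rfl _ s s' hmap,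
          ht2]
    obtain ⟨t, ht, hto⟩ := key m 0 (by omega) (initState n b)
      (fun i => rfl) rfl (fun k => rfl) (fun j' k _ => rfl) (fun j' hj' => absurd hj' (by omega))
    refine ⟨t, ht, ?_⟩
    rw [hto, hfb b]

  · -- length
    have hblkL : ∀ k, (blk k).length ≤ l := by
      intro k
      simp only [hblk_def]
      by_cases hk : k < m
      · rw [dif_pos hk, adj_length, List.length_map]
        exact hXlen ⟨k, hk⟩
      · rw [dif_neg hk]; exact Nat.zero_le l
    calc (chainProg blk Y' 0 m).length ≤ m * l + Y'.length :=
          chainProg_length blk Y' l hblkL m 0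
      _ ≤ q.eval n * q.eval n + p.eval (q.eval n) := by
          have h1 : Y'.length ≤ p.eval (q.eval n) := by
            rw [hY'_def, List.length_map]
            exact le_trans hYlen (poly_eval_mono p hm)
          have h2 : m * l ≤ q.eval n * q.eval n := Nat.mul_le_mul hm hl
          omega
      _ = (q * q + p.comp q).eval n := by
          rw [Polynomial.eval_add, Polynomial.eval_mul, Polynomial.eval_comp]
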